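/- Let (a_n)_{n ∈ ℕ} be a sequence of nonnegative real numbers and let ρ > 0 be such that the sequence (ρ^n a_n)_n is nondecreasing, and assume that the series ∑_n a_n z^n converges for every z ∈ [0, ρ). Then for all real numbers z, γ with 0 ≤ z < γ < ρ one has (ρ − z) ∑_{n=0}^∞ a_n z^n ≤ (ρ − γ) ∑_{n=0}^∞ a_n γ^n; in other words, the function z ↦ (ρ − z) ∑_n a_n z^n is nondecreasing on [0, ρ). -/

import Mathlib

lemma stmt_10_aux (a : ℕ → ℝ) (ρ : ℝ) (z : ℝ)
    (hs : Summable (fun n => a n * z ^ n)) :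
    (ρ - z) * ∑' n, a n * z ^ n
      = ρ * a 0 + ∑' n, (ρ * a (n + 1) - a n) * z ^ (n + 1) := by
  have hshift : Summable (fun n => a (n + 1) * z ^ (n + 1)) := by
    have := hs.comp_injective (add_left_injective 1)
    simpa [Function.comp_def] using this
  have h1 : ∑' n, a n * z ^ n = a 0 + ∑' n, a (n + 1) * z ^ (n + 1) := by
    simpa using Summable.tsum_eq_zero_add hs
  have h2 : ∑' n, (ρ * a (n + 1) - a n) * z ^ (n + 1)
      = ρ * ∑' n, a (n + 1) * z ^ (n + 1) - z * ∑' n, a n * z ^ n := by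
    have hρs : Summable (fun n => ρ * (a (n + 1) * z ^ (n + 1))) := hshift.mul_left ρ
    have hzs : Summable (fun n => z * (a n * z ^ n)) := hs.mul_left z
    have : ∑' n, (ρ * (a (n + 1) * z ^ (n + 1)) - z * (a n * z ^ n))
        = (∑' n, ρ * (a (n + 1) * z ^ (n + 1))) - ∑' n, z * (a n * z ^ n) :=
      Summable.tsum_sub hρs hzs
    rw [tsum_mul_left, tsum_mul_left] at this
    rw [← this]
    congr 1
    funext n
    ring
  rw [h2, h1]
  ring

theorem stmt_10 (a : ℕ → ℝ) (ha : ∀ n, 0 ≤ a n) (ρ : ℝ) (hρ : 0 < ρ)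
    (hmono : ∀ n, ρ ^ n * a n ≤ ρ ^ (n + 1) * a (n + 1))
    (hsum : ∀ z : ℝ, 0 ≤ z → z < ρ → Summable (fun n => a n * z ^ n))
    (z γ : ℝ) (hz : 0 ≤ z) (hzγ : z < γ) (hγρ : γ < ρ) :
    (ρ - z) * ∑' n, a n * z ^ n ≤ (ρ - γ) * ∑' n, a n * γ ^ n := by
  have hγ0 : 0 ≤ γ := le_trans hz hzγ.le
  have hsz : Summable (fun n => a n * z ^ n) := hsum z hz (hzγ.trans hγρ)
  have hsγ : Summable (fun n => a n * γ ^ n) := hsum γ hγ0 hγρ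
  rw [stmt_10_aux a ρ z hsz, stmt_10_aux a ρ γ hsγ]
  gcongr _ + ?_
  have shiftz : Summable (fun n => a (n + 1) * z ^ (n + 1)) := by
    simpa [Function.comp_def] using hsz.comp_injective (add_left_injective 1)
  have shiftγ : Summable (fun n => a (n + 1) * γ ^ (n + 1)) := by
    simpa [Function.comp_def] using hsγ.comp_injective (add_left_injective 1)
  have hcoef : ∀ n, 0 ≤ ρ * a (n + 1) - a n := by
    intro n
    have h := hmono n
    have hρn : 0 < ρ ^ n := pow_pos hρ n
    have h' : ρ ^ n * a n ≤ ρ ^ n * (ρ * a (n + 1)) := by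
      rw [pow_succ] at h
      linarith [mul_assoc (ρ ^ n) ρ (a (n + 1))]
    linarith [le_of_mul_le_mul_left h' hρn]
  have hsumz : Summable (fun n => (ρ * a (n + 1) - a n) * z ^ (n + 1)) := by
    have : (fun n => (ρ * a (n + 1) - a n) * z ^ (n + 1))
        = fun n => ρ * (a (n + 1) * z ^ (n + 1)) - z * (a n * z ^ n) := by
      funext n; ring
    rw [this]
    exact (shiftz.mul_left ρ).sub (hsz.mul_left z)
  have hsumγ : Summable (fun n => (ρ * a (n + 1) - a n) * γ ^ (n + 1)) := by
    have : (fun n => (ρ * a (n + 1) - a n) * γ ^ (n + 1))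
        = fun n => ρ * (a (n + 1) * γ ^ (n + 1)) - γ * (a n * γ ^ n) := by
      funext n; ring
    rw [this]
    exact (shiftγ.mul_left ρ).sub (hsγ.mul_left γ)
  refine Summable.tsum_le_tsum (fun n => ?_) hsumz hsumγ
  have h1 := hcoef n
  have h2 : z ^ (n+1) ≤ γ ^ (n+1) := pow_le_pow_left₀ hz hzγ.le _
  exact mul_le_mul_of_nonneg_left h2 h1
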